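/- arXiv:2602.05227 — 2 statements merged into one kernel-verified Lean document; each statement's English description precedes it below -/
import Mathlib

section
/- Under the same setup as the linear-growth estimate, with f and g as above, there exists M depending only on L, |∇U(0)|, ‖k‖_{C²_b}, ε^{-1} such that for all θ ∈ S^{d-1}, p, q ∈ ℝ, and probability measures μ, ν on ℝ^d with finite second moments: |f(θ,p,μ)/g(θ,p,μ) − f(θ,q,ν)/g(θ,q,ν)| ≤ M(1 + m₂(μ)^{1/2}) (|p − q| + W₂(μ, ν)). -/
open MeasureTheory Metric Real
open scoped ENNReal NNReal
noncomputable section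

abbrev E (d : ℕ) := EuclideanSpace ℝ (Fin d)

/-- A coupling of two measures on `ℝ^d`. -/
def IsCoupling {d : ℕ} (γ : Measure (E d × E d)) (μ ν : Measure (E d)) : Prop :=
  γ.map Prod.fst = μ ∧ γ.map Prod.snd = ν

/-- The 2-Wasserstein distance on measures on `ℝ^d`. -/
def W2 {d : ℕ} (μ ν : Measure (E d)) : ℝ :=
  Real.sqrt (sInf { r : ℝ | ∃ γ : Measure (E d × E d), IsCoupling γ μ ν ∧
    r = ∫ q, ‖q.1 - q.2‖ ^ 2 ∂γ })

/-- Second moment `m₂(μ) = ∫ |x|² dμ`. -/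
def m2 {d : ℕ} (μ : Measure (E d)) : ℝ := ∫ x, ‖x‖ ^ 2 ∂μ


/-- The numerator `f(θ,p,μ)` of the kernel-density Radon–Wasserstein velocity. -/
def fRW {d : ℕ} (k kd : ℝ → ℝ) (gU : E d → E d) (θ : sphere (0 : E d) 1) (p : ℝ)
    (μ : Measure (E d)) : ℝ :=
  ∫ x, (kd (p - (inner ℝ x (θ : E d) : ℝ)) +
    k (p - (inner ℝ x (θ : E d) : ℝ)) * (inner ℝ (θ : E d) (gU x) : ℝ)) ∂μ

/-- The denominator `g(θ,p,μ)` of the kernel-density Radon–Wasserstein velocity. -/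
def gRW {d : ℕ} (k : ℝ → ℝ) (ε : ℝ) (θ : sphere (0 : E d) 1) (p : ℝ)
    (μ : Measure (E d)) : ℝ :=
  (∫ x, k (p - (inner ℝ x (θ : E d) : ℝ)) ∂μ) + ε

/- ---------------- Auxiliary lemmas ---------------- -/

lemma lip_of_deriv {f f' : ℝ → ℝ} {C : ℝ} (h : ∀ x, HasDerivAt f (f' x) x)
    (hb : ∀ x, |f' x| ≤ C) (a b : ℝ) : |f a - f b| ≤ C * |a - b| := by
  have := Convex.norm_image_sub_le_of_norm_hasDerivWithin_le
    (f := f) (f' := f') (s := Set.univ) (C := C)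
    (fun x _ => (h x).hasDerivWithinAt)
    (fun x _ => by simpa [Real.norm_eq_abs] using hb x)
    convex_univ (Set.mem_univ b) (Set.mem_univ a)
  simpa [Real.norm_eq_abs] using this

lemma cauchy_schwarz_int {α : Type*} [MeasurableSpace α] (γ : Measure α)
    {F G : α → ℝ} (hF : AEStronglyMeasurable F γ) (hG : AEStronglyMeasurable G γ)
    (hF0 : ∀ x, 0 ≤ F x) (hG0 : ∀ x, 0 ≤ G x)
    (hF2 : Integrable (fun x => F x ^ 2) γ) (hG2 : Integrable (fun x => G x ^ 2) γ) :
    ∫ x, F x * G x ∂γ ≤ Real.sqrt (∫ x, F x ^ 2 ∂γ) * Real.sqrt (∫ x, G x ^ 2 ∂γ) := by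
  have hpq : Real.HolderConjugate 2 2 := Real.HolderConjugate.two_two
  have hFm : MemLp F (ENNReal.ofReal 2) γ := by
    rw [show ENNReal.ofReal 2 = 2 by norm_num]
    exact (memLp_two_iff_integrable_sq hF).2 hF2
  have hGm : MemLp G (ENNReal.ofReal 2) γ := by
    rw [show ENNReal.ofReal 2 = 2 by norm_num]
    exact (memLp_two_iff_integrable_sq hG).2 hG2
  have := integral_mul_le_Lp_mul_Lq_of_nonneg hpq
    (Filter.Eventually.of_forall hF0) (Filter.Eventually.of_forall hG0) hFm hGm
  simp_rw [show (2:ℝ) = ((2:ℕ):ℝ) by norm_num, Real.rpow_natCast] at this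
  calc ∫ x, F x * G x ∂γ
      ≤ (∫ x, F x ^ (2:ℕ) ∂γ) ^ ((1:ℝ)/((2:ℕ):ℝ)) *
        (∫ x, G x ^ (2:ℕ) ∂γ) ^ ((1:ℝ)/((2:ℕ):ℝ)) := this
  _ = _ := by norm_num [← Real.sqrt_eq_rpow]

lemma integrable_of_sq' {α : Type*} [MeasurableSpace α] {γ : Measure α} [IsFiniteMeasure γ]
    {F : α → ℝ} (hF : AEStronglyMeasurable F γ)
    (hF2 : Integrable (fun x => F x ^ 2) γ) : Integrable F γ := by
  refine Integrable.mono ((integrable_const (1:ℝ)).add hF2) hF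
    (Filter.Eventually.of_forall fun x => ?_)
  have h1 : |F x| ≤ 1 + F x ^ 2 := by nlinarith [sq_nonneg (|F x| - 1), sq_abs (F x)]
  calc ‖F x‖ = |F x| := rfl
  _ ≤ 1 + F x ^ 2 := h1
  _ ≤ ‖1 + F x ^ 2‖ := le_abs_self _

lemma int_le_sqrt_int_sq {α : Type*} [MeasurableSpace α] (γ : Measure α)
    [IsProbabilityMeasure γ] {F : α → ℝ} (hF : AEStronglyMeasurable F γ)
    (hF0 : ∀ x, 0 ≤ F x) (hF2 : Integrable (fun x => F x ^ 2) γ) :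
    ∫ x, F x ∂γ ≤ Real.sqrt (∫ x, F x ^ 2 ∂γ) := by
  have := cauchy_schwarz_int γ (G := fun _ => (1:ℝ)) hF aestronglyMeasurable_const hF0
    (fun _ => zero_le_one) hF2 (by simpa using integrable_const (1:ℝ))
  simpa using this

lemma coupling_fst_integral {d : ℕ} {γ : Measure (E d × E d)} {μ : Measure (E d)}
    (h : γ.map Prod.fst = μ) {F : E d → ℝ} (hF : Continuous F) :
    ∫ y, F y ∂μ = ∫ x : E d × E d, F x.1 ∂γ := by
  rw [← h, integral_map measurable_fst.aemeasurable hF.aestronglyMeasurable]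

lemma coupling_snd_integral {d : ℕ} {γ : Measure (E d × E d)} {ν : Measure (E d)}
    (h : γ.map Prod.snd = ν) {F : E d → ℝ} (hF : Continuous F) :
    ∫ y, F y ∂ν = ∫ x : E d × E d, F x.2 ∂γ := by
  rw [← h, integral_map measurable_snd.aemeasurable hF.aestronglyMeasurable]

lemma coupling_fst_integrable {d : ℕ} {γ : Measure (E d × E d)} {μ : Measure (E d)}
    (h : γ.map Prod.fst = μ) {F : E d → ℝ} (hF : Continuous F)
    (hi : Integrable F μ) : Integrable (fun x : E d × E d => F x.1) γ := by
  rw [← h] at hi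
  exact
    (integrable_map_measure hF.aestronglyMeasurable measurable_fst.aemeasurable).mp hi

lemma coupling_snd_integrable {d : ℕ} {γ : Measure (E d × E d)} {ν : Measure (E d)}
    (h : γ.map Prod.snd = ν) {F : E d → ℝ} (hF : Continuous F)
    (hi : Integrable F ν) : Integrable (fun x : E d × E d => F x.2) γ := by
  rw [← h] at hi
  exact
    (integrable_map_measure hF.aestronglyMeasurable measurable_snd.aemeasurable).mp hi

lemma div_diff_bound {F F' G G' Bf BF Bg ε : ℝ} (hε : 0 < ε) (hgp : ε ≤ G) (hgq : ε ≤ G')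
    (hfd : |F - F'| ≤ Bf) (hgd : |G - G'| ≤ Bg) (hfb : |F| ≤ BF)
    (hBf0 : 0 ≤ Bf) (hBF0 : 0 ≤ BF) (hBg0 : 0 ≤ Bg) :
    |F / G - F' / G'| ≤ BF * Bg / ε ^ 2 + Bf / ε := by
  have hGpos : 0 < G := hε.trans_le hgp
  have hG'pos : 0 < G' := hε.trans_le hgq
  have e : F / G - F' / G' = (F * (G' - G) + (F - F') * G) / (G * G') := by
    field_simp
    ring
  rw [e, abs_div, abs_of_pos (mul_pos hGpos hG'pos)]
  have hnum : |F * (G' - G) + (F - F') * G| ≤ BF * Bg + Bf * G := by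
    calc |F * (G' - G) + (F - F') * G| ≤ |F * (G' - G)| + |(F - F') * G| := abs_add_le _ _
    _ = |F| * |G' - G| + |F - F'| * |G| := by rw [abs_mul, abs_mul]
    _ ≤ BF * Bg + Bf * G := by
        refine add_le_add (mul_le_mul hfb ?_ (abs_nonneg _) hBF0) ?_
        · rw [abs_sub_comm]; exact hgd
        · rw [abs_of_pos hGpos]
          exact mul_le_mul_of_nonneg_right hfd hGpos.le
  calc |F * (G' - G) + (F - F') * G| / (G * G') ≤ (BF * Bg + Bf * G) / (G * G') := by
        gcongr
  _ = (BF * Bg) / (G * G') + (Bf * G) / (G * G') := by rw [add_div]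
  _ ≤ (BF * Bg) / (ε * ε) + (Bf * G) / (G * ε) := by
        have h1 : ε * ε ≤ G * G' := mul_le_mul hgp hgq hε.le hGpos.le
        have h2 : G * ε ≤ G * G' := mul_le_mul_of_nonneg_left hgq hGpos.le
        gcongr <;> first
          | exact h1
          | exact h2
          | positivity
  _ = BF * Bg / ε ^ 2 + Bf / ε := by
        rw [mul_comm Bf G, mul_div_mul_left _ _ hGpos.ne', sq]

set_option maxHeartbeats 4000000 in
lemma key_estimate {d : ℕ} (k kd kdd : ℝ → ℝ) (Ck : ℝ)
    (hk_pos : ∀ p, 0 < k p)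
    (hk' : ∀ p, HasDerivAt k (kd p) p) (hk'' : ∀ p, HasDerivAt kd (kdd p) p)
    (hk_bdd : ∀ p, |k p| ≤ Ck) (hkd_bdd : ∀ p, |kd p| ≤ Ck) (hkdd_bdd : ∀ p, |kdd p| ≤ Ck)
    (gU : E d → E d) (L : ℝ≥0) (hLip : LipschitzWith L gU)
    (ε : ℝ) (hε : 0 < ε)
    (θ : sphere (0 : E d) 1) (p q : ℝ) (μ ν : Measure (E d))
    (hμ : IsProbabilityMeasure μ) (hν : IsProbabilityMeasure ν)
    (hμ2 : Integrable (fun x => ‖x‖ ^ 2) μ) (hν2 : Integrable (fun x => ‖x‖ ^ 2) ν)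
    (γ : Measure (E d × E d)) (hγ : IsCoupling γ μ ν) :
    |fRW k kd gU θ p μ / gRW k ε θ p μ - fRW k kd gU θ q ν / gRW k ε θ q ν| ≤
      ((Ck * (1 + ‖gU 0‖ + 2 * (L:ℝ))) / ε + (Ck * (1 + ‖gU 0‖ + (L:ℝ))) * Ck / ε ^ 2) *
        (1 + Real.sqrt (m2 μ)) *
        (|p - q| + Real.sqrt (∫ x, ‖x.1 - x.2‖ ^ 2 ∂γ)) := by
  have hCk : 0 < Ck := lt_of_lt_of_le (abs_pos.mpr (hk_pos 0).ne') (hk_bdd 0)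
  have hθ1 : ‖(θ : E d)‖ = 1 := by
    have := θ.2; rwa [mem_sphere_zero_iff_norm] at this
  have hA0 : (0:ℝ) ≤ ‖gU 0‖ := norm_nonneg _
  have hL0 : (0:ℝ) ≤ (L:ℝ) := L.coe_nonneg
  -- continuity of the kernel and related functions
  have hkc : Continuous k := Differentiable.continuous fun x => (hk' x).differentiableAt
  have hkdc : Continuous kd := Differentiable.continuous fun x => (hk'' x).differentiableAt
  have hgUc : Continuous gU := hLip.continuous
  have hφc : ∀ r : ℝ, Continuous fun y : E d => r - (inner ℝ y (θ : E d) : ℝ) := fun r =>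
    continuous_const.sub (continuous_id.inner continuous_const)
  have hHc : ∀ r : ℝ, Continuous fun y : E d =>
      kd (r - (inner ℝ y (θ : E d) : ℝ)) +
        k (r - (inner ℝ y (θ : E d) : ℝ)) * (inner ℝ (θ : E d) (gU y) : ℝ) := fun r =>
    (hkdc.comp (hφc r)).add ((hkc.comp (hφc r)).mul (continuous_const.inner hgUc))
  have hKc : ∀ r : ℝ, Continuous fun y : E d => k (r - (inner ℝ y (θ : E d) : ℝ)) := fun r =>
    hkc.comp (hφc r)
  -- γ is a probability measure
  haveI : IsProbabilityMeasure γ := by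
    constructor
    have h1 : γ.map Prod.fst Set.univ = 1 := by rw [hγ.1]; exact measure_univ
    rwa [Measure.map_apply measurable_fst MeasurableSet.univ, Set.preimage_univ] at h1
  -- pointwise Lipschitz bounds
  have hklip : ∀ a b, |k a - k b| ≤ Ck * |a - b| := lip_of_deriv hk' hkd_bdd
  have hkdlip : ∀ a b, |kd a - kd b| ≤ Ck * |a - b| := lip_of_deriv hk'' hkdd_bdd
  have hgUb : ∀ x : E d, ‖gU x‖ ≤ ‖gU 0‖ + (L:ℝ) * ‖x‖ := by
    intro x
    have h := hLip.dist_le_mul x 0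
    rw [dist_eq_norm, dist_eq_norm, sub_zero] at h
    have h2 := norm_sub_norm_le (gU x) (gU 0)
    linarith
  have hinner1 : ∀ v : E d, |(inner ℝ v (θ : E d) : ℝ)| ≤ ‖v‖ := by
    intro v
    calc |(inner ℝ v (θ : E d) : ℝ)| ≤ ‖v‖ * ‖(θ : E d)‖ := abs_real_inner_le_norm v _
    _ = ‖v‖ := by rw [hθ1, mul_one]
  have hinner2 : ∀ v : E d, |(inner ℝ (θ : E d) v : ℝ)| ≤ ‖v‖ := by
    intro v
    calc |(inner ℝ (θ : E d) v : ℝ)| ≤ ‖(θ : E d)‖ * ‖v‖ := abs_real_inner_le_norm _ v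
    _ = ‖v‖ := by rw [hθ1, one_mul]
  -- integrability facts under γ
  have hmfst : Integrable (fun x : E d × E d => ‖x.1‖ ^ 2) γ :=
    coupling_fst_integrable hγ.1 (continuous_norm.pow 2) hμ2
  have hmsnd : Integrable (fun x : E d × E d => ‖x.2‖ ^ 2) γ :=
    coupling_snd_integrable hγ.2 (continuous_norm.pow 2) hν2
  have hcD : Continuous fun x : E d × E d => ‖x.1 - x.2‖ :=
    (continuous_fst.sub continuous_snd).norm
  have hD2 : Integrable (fun x : E d × E d => ‖x.1 - x.2‖ ^ 2) γ := by
    refine Integrable.mono ((hmfst.add hmsnd).const_mul 2)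
      ((hcD.pow 2).aestronglyMeasurable) (Filter.Eventually.of_forall fun x => ?_)
    simp only [Pi.add_apply]
    have h1 : ‖x.1 - x.2‖ ≤ ‖x.1‖ + ‖x.2‖ := norm_sub_le _ _
    have h2 : (0:ℝ) ≤ ‖x.1‖ := norm_nonneg _
    have h3 : (0:ℝ) ≤ ‖x.2‖ := norm_nonneg _
    have h4 : (0:ℝ) ≤ ‖x.1 - x.2‖ := norm_nonneg _
    rw [Real.norm_eq_abs, Real.norm_eq_abs, abs_of_nonneg (by positivity),
      abs_of_nonneg (by positivity)]
    nlinarith [sq_nonneg (‖x.1‖ - ‖x.2‖)]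
  have hD1 : Integrable (fun x : E d × E d => ‖x.1 - x.2‖) γ :=
    integrable_of_sq' hcD.aestronglyMeasurable hD2
  have hN1 : Integrable (fun x : E d × E d => ‖x.1‖) γ :=
    integrable_of_sq' continuous_fst.norm.aestronglyMeasurable hmfst
  have hDN : Integrable (fun x : E d × E d => ‖x.1 - x.2‖ * ‖x.1‖) γ := by
    refine Integrable.mono (hD2.add hmfst)
      ((hcD.mul continuous_fst.norm).aestronglyMeasurable)
      (Filter.Eventually.of_forall fun x => ?_)
    simp only [Pi.add_apply]
    have h2 : (0:ℝ) ≤ ‖x.1‖ := norm_nonneg _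
    have h4 : (0:ℝ) ≤ ‖x.1 - x.2‖ := norm_nonneg _
    rw [Real.norm_eq_abs, Real.norm_eq_abs, abs_of_nonneg (by positivity),
      abs_of_nonneg (by positivity)]
    nlinarith [sq_nonneg (‖x.1 - x.2‖ - ‖x.1‖)]
  set S : ℝ := Real.sqrt (∫ x : E d × E d, ‖x.1 - x.2‖ ^ 2 ∂γ) with hSdef
  set Rm : ℝ := Real.sqrt (m2 μ) with hRmdef
  have hS0 : 0 ≤ S := Real.sqrt_nonneg _
  have hRm0 : 0 ≤ Rm := Real.sqrt_nonneg _
  clear_value S Rm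
  have hm2eq : ∫ x : E d × E d, ‖x.1‖ ^ 2 ∂γ = m2 μ :=
    (coupling_fst_integral hγ.1 (continuous_norm.pow 2)).symm
  have hID : ∫ x : E d × E d, ‖x.1 - x.2‖ ∂γ ≤ S := by
    rw [hSdef]
    exact int_le_sqrt_int_sq γ hcD.aestronglyMeasurable (fun x => norm_nonneg _) hD2
  have hIN : ∫ x : E d × E d, ‖x.1‖ ∂γ ≤ Rm := by
    rw [hRmdef]
    have := int_le_sqrt_int_sq γ continuous_fst.norm.aestronglyMeasurable
      (fun x => norm_nonneg _) hmfst
    rwa [hm2eq] at this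
  have hIDN : ∫ x : E d × E d, ‖x.1 - x.2‖ * ‖x.1‖ ∂γ ≤ S * Rm := by
    rw [hSdef, hRmdef]
    have := cauchy_schwarz_int γ hcD.aestronglyMeasurable
      continuous_fst.norm.aestronglyMeasurable (fun x => norm_nonneg _)
      (fun x => norm_nonneg _) hD2 hmfst
    rwa [hm2eq] at this
  have hID0 : 0 ≤ ∫ x : E d × E d, ‖x.1 - x.2‖ ∂γ := integral_nonneg fun x => norm_nonneg _
  have hIN0 : 0 ≤ ∫ x : E d × E d, ‖x.1‖ ∂γ := integral_nonneg fun x => norm_nonneg _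
  have hIDN0 : 0 ≤ ∫ x : E d × E d, ‖x.1 - x.2‖ * ‖x.1‖ ∂γ :=
    integral_nonneg fun x => mul_nonneg (norm_nonneg _) (norm_nonneg _)
  -- transfer of the integrals defining fRW and gRW
  have efp : fRW k kd gU θ p μ = ∫ x : E d × E d,
      (kd (p - (inner ℝ x.1 (θ : E d) : ℝ)) +
        k (p - (inner ℝ x.1 (θ : E d) : ℝ)) * (inner ℝ (θ : E d) (gU x.1) : ℝ)) ∂γ :=
    coupling_fst_integral hγ.1 (hHc p)
  have efq : fRW k kd gU θ q ν = ∫ x : E d × E d,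
      (kd (q - (inner ℝ x.2 (θ : E d) : ℝ)) +
        k (q - (inner ℝ x.2 (θ : E d) : ℝ)) * (inner ℝ (θ : E d) (gU x.2) : ℝ)) ∂γ :=
    coupling_snd_integral hγ.2 (hHc q)
  have egp : gRW k ε θ p μ = (∫ x : E d × E d, k (p - (inner ℝ x.1 (θ : E d) : ℝ)) ∂γ) + ε := by
    rw [gRW, coupling_fst_integral hγ.1 (hKc p)]
  have egq : gRW k ε θ q ν = (∫ x : E d × E d, k (q - (inner ℝ x.2 (θ : E d) : ℝ)) ∂γ) + ε := by
    rw [gRW, coupling_snd_integral hγ.2 (hKc q)]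
  -- integrability of the integrands
  have hHbound : ∀ (r : ℝ) (y : E d),
      |kd (r - (inner ℝ y (θ : E d) : ℝ)) +
        k (r - (inner ℝ y (θ : E d) : ℝ)) * (inner ℝ (θ : E d) (gU y) : ℝ)| ≤
      Ck * (1 + ‖gU 0‖) + Ck * (L:ℝ) * ‖y‖ := by
    intro r y
    have h1 := hkd_bdd (r - (inner ℝ y (θ : E d) : ℝ))
    have h2 := hk_bdd (r - (inner ℝ y (θ : E d) : ℝ))
    have h3 := (hinner2 (gU y)).trans (hgUb y)
    calc |kd (r - (inner ℝ y (θ : E d) : ℝ)) +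
        k (r - (inner ℝ y (θ : E d) : ℝ)) * (inner ℝ (θ : E d) (gU y) : ℝ)|
        ≤ |kd (r - (inner ℝ y (θ : E d) : ℝ))| +
          |k (r - (inner ℝ y (θ : E d) : ℝ)) * (inner ℝ (θ : E d) (gU y) : ℝ)| := abs_add_le _ _
    _ = |kd (r - (inner ℝ y (θ : E d) : ℝ))| +
          |k (r - (inner ℝ y (θ : E d) : ℝ))| * |(inner ℝ (θ : E d) (gU y) : ℝ)| := by
        rw [abs_mul]
    _ ≤ Ck + Ck * (‖gU 0‖ + (L:ℝ) * ‖y‖) := by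
        refine add_le_add h1 (mul_le_mul h2 h3 (abs_nonneg _) hCk.le)
    _ = Ck * (1 + ‖gU 0‖) + Ck * (L:ℝ) * ‖y‖ := by ring
  have hHμ : Integrable (fun y : E d =>
      kd (p - (inner ℝ y (θ : E d) : ℝ)) +
        k (p - (inner ℝ y (θ : E d) : ℝ)) * (inner ℝ (θ : E d) (gU y) : ℝ)) μ := by
    have hNμ : Integrable (fun x : E d => ‖x‖) μ :=
      integrable_of_sq' continuous_norm.aestronglyMeasurable hμ2
    refine Integrable.mono ((integrable_const (Ck * (1 + ‖gU 0‖))).add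
      (hNμ.const_mul (Ck * (L:ℝ)))) (hHc p).aestronglyMeasurable
      (Filter.Eventually.of_forall fun y => ?_)
    rw [Real.norm_eq_abs, Real.norm_eq_abs]
    exact (hHbound p y).trans (le_abs_self _)
  have hHfst : Integrable (fun x : E d × E d =>
      kd (p - (inner ℝ x.1 (θ : E d) : ℝ)) +
        k (p - (inner ℝ x.1 (θ : E d) : ℝ)) * (inner ℝ (θ : E d) (gU x.1) : ℝ)) γ :=
    coupling_fst_integrable hγ.1 (hHc p) hHμ
  have hHν : Integrable (fun y : E d =>
      kd (q - (inner ℝ y (θ : E d) : ℝ)) +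
        k (q - (inner ℝ y (θ : E d) : ℝ)) * (inner ℝ (θ : E d) (gU y) : ℝ)) ν := by
    have hNν : Integrable (fun x : E d => ‖x‖) ν :=
      integrable_of_sq' continuous_norm.aestronglyMeasurable hν2
    refine Integrable.mono ((integrable_const (Ck * (1 + ‖gU 0‖))).add
      (hNν.const_mul (Ck * (L:ℝ)))) (hHc q).aestronglyMeasurable
      (Filter.Eventually.of_forall fun y => ?_)
    rw [Real.norm_eq_abs, Real.norm_eq_abs]
    exact (hHbound q y).trans (le_abs_self _)
  have hHsnd : Integrable (fun x : E d × E d =>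
      kd (q - (inner ℝ x.2 (θ : E d) : ℝ)) +
        k (q - (inner ℝ x.2 (θ : E d) : ℝ)) * (inner ℝ (θ : E d) (gU x.2) : ℝ)) γ :=
    coupling_snd_integrable hγ.2 (hHc q) hHν
  have hKfst : Integrable (fun x : E d × E d => k (p - (inner ℝ x.1 (θ : E d) : ℝ))) γ := by
    refine Integrable.mono (integrable_const Ck)
      ((hKc p).comp continuous_fst).aestronglyMeasurable
      (Filter.Eventually.of_forall fun x => ?_)
    rw [Real.norm_eq_abs, Real.norm_eq_abs]
    exact (hk_bdd _).trans (le_abs_self _)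
  have hKsnd : Integrable (fun x : E d × E d => k (q - (inner ℝ x.2 (θ : E d) : ℝ))) γ := by
    refine Integrable.mono (integrable_const Ck)
      ((hKc q).comp continuous_snd).aestronglyMeasurable
      (Filter.Eventually.of_forall fun x => ?_)
    rw [Real.norm_eq_abs, Real.norm_eq_abs]
    exact (hk_bdd _).trans (le_abs_self _)
  -- pointwise bound on the difference of the f-integrands
  have hHdiff : ∀ x : E d × E d,
      |(kd (p - (inner ℝ x.1 (θ : E d) : ℝ)) +
          k (p - (inner ℝ x.1 (θ : E d) : ℝ)) * (inner ℝ (θ : E d) (gU x.1) : ℝ)) -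
        (kd (q - (inner ℝ x.2 (θ : E d) : ℝ)) +
          k (q - (inner ℝ x.2 (θ : E d) : ℝ)) * (inner ℝ (θ : E d) (gU x.2) : ℝ))| ≤
      Ck * (1 + ‖gU 0‖) * |p - q| + ((Ck * (1 + ‖gU 0‖)) * ‖x.1 - x.2‖ +
        ((Ck * (L:ℝ) * |p - q|) * ‖x.1‖ + ((Ck * (L:ℝ)) * (‖x.1 - x.2‖ * ‖x.1‖) +
          (Ck * (L:ℝ)) * ‖x.1 - x.2‖))) := by
    intro x
    set a : ℝ := p - (inner ℝ x.1 (θ : E d) : ℝ) with ha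
    set b : ℝ := q - (inner ℝ x.2 (θ : E d) : ℝ) with hb
    set u : ℝ := (inner ℝ (θ : E d) (gU x.1) : ℝ) with hu
    set v : ℝ := (inner ℝ (θ : E d) (gU x.2) : ℝ) with hv
    have hab : |a - b| ≤ |p - q| + ‖x.1 - x.2‖ := by
      have e : a - b = (p - q) - (inner ℝ (x.1 - x.2) (θ : E d) : ℝ) := by
        rw [ha, hb, inner_sub_left]; ring
      rw [e]
      calc |(p - q) - (inner ℝ (x.1 - x.2) (θ : E d) : ℝ)|
          ≤ |p - q| + |(inner ℝ (x.1 - x.2) (θ : E d) : ℝ)| := abs_sub _ _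
      _ ≤ |p - q| + ‖x.1 - x.2‖ := add_le_add_right (hinner1 _) _
    have huv : |u - v| ≤ (L:ℝ) * ‖x.1 - x.2‖ := by
      have e : u - v = (inner ℝ (θ : E d) (gU x.1 - gU x.2) : ℝ) := by
        rw [hu, hv, inner_sub_right]
      rw [e]
      refine (hinner2 _).trans ?_
      have := hLip.dist_le_mul x.1 x.2
      rwa [dist_eq_norm, dist_eq_norm] at this
    have hub : |u| ≤ ‖gU 0‖ + (L:ℝ) * ‖x.1‖ := (hinner2 _).trans (hgUb _)
    have h1 := hkdlip a b
    have h2 := hklip a b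
    have h3 := hk_bdd b
    have main : |(kd a + k a * u) - (kd b + k b * v)| ≤
        |kd a - kd b| + (|k a - k b| * |u| + |k b| * |u - v|) := by
      have e : (kd a + k a * u) - (kd b + k b * v) =
          (kd a - kd b) + ((k a - k b) * u + k b * (u - v)) := by ring
      rw [e]
      refine (abs_add_le _ _).trans (add_le_add_right ?_ _)
      refine (abs_add_le _ _).trans ?_
      rw [abs_mul, abs_mul]
    refine main.trans ?_
    have s1 : |kd a - kd b| ≤ Ck * (|p - q| + ‖x.1 - x.2‖) :=
      h1.trans (mul_le_mul_of_nonneg_left hab hCk.le)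
    have s2 : |k a - k b| * |u| ≤ (Ck * (|p - q| + ‖x.1 - x.2‖)) * (‖gU 0‖ + (L:ℝ) * ‖x.1‖) := by
      refine mul_le_mul (h2.trans (mul_le_mul_of_nonneg_left hab hCk.le)) hub
        (abs_nonneg _) (by positivity)
    have s3 : |k b| * |u - v| ≤ Ck * ((L:ℝ) * ‖x.1 - x.2‖) :=
      mul_le_mul h3 huv (abs_nonneg _) hCk.le
    calc |kd a - kd b| + (|k a - k b| * |u| + |k b| * |u - v|)
        ≤ Ck * (|p - q| + ‖x.1 - x.2‖) +
          ((Ck * (|p - q| + ‖x.1 - x.2‖)) * (‖gU 0‖ + (L:ℝ) * ‖x.1‖) +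
            Ck * ((L:ℝ) * ‖x.1 - x.2‖)) := add_le_add s1 (add_le_add s2 s3)
    _ = _ := by ring
  -- bound on |f(p,μ) - f(q,ν)|
  have hBint : Integrable (fun x : E d × E d =>
      Ck * (1 + ‖gU 0‖) * |p - q| + ((Ck * (1 + ‖gU 0‖)) * ‖x.1 - x.2‖ +
        ((Ck * (L:ℝ) * |p - q|) * ‖x.1‖ + ((Ck * (L:ℝ)) * (‖x.1 - x.2‖ * ‖x.1‖) +
          (Ck * (L:ℝ)) * ‖x.1 - x.2‖)))) γ :=
    (integrable_const _).add ((hD1.const_mul _).add ((hN1.const_mul _).add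
      ((hDN.const_mul _).add (hD1.const_mul _))))
  have hfd : |fRW k kd gU θ p μ - fRW k kd gU θ q ν| ≤
      Ck * (1 + ‖gU 0‖) * |p - q| + ((Ck * (1 + ‖gU 0‖)) * S +
        ((Ck * (L:ℝ) * |p - q|) * Rm + ((Ck * (L:ℝ)) * (S * Rm) +
          (Ck * (L:ℝ)) * S))) := by
    rw [efp, efq, ← integral_sub hHfst hHsnd]
    have h1 : ‖∫ x : E d × E d,
        ((kd (p - (inner ℝ x.1 (θ : E d) : ℝ)) +
          k (p - (inner ℝ x.1 (θ : E d) : ℝ)) * (inner ℝ (θ : E d) (gU x.1) : ℝ)) -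
        (kd (q - (inner ℝ x.2 (θ : E d) : ℝ)) +
          k (q - (inner ℝ x.2 (θ : E d) : ℝ)) * (inner ℝ (θ : E d) (gU x.2) : ℝ))) ∂γ‖ ≤
        ∫ x : E d × E d, (Ck * (1 + ‖gU 0‖) * |p - q| + ((Ck * (1 + ‖gU 0‖)) * ‖x.1 - x.2‖ +
        ((Ck * (L:ℝ) * |p - q|) * ‖x.1‖ + ((Ck * (L:ℝ)) * (‖x.1 - x.2‖ * ‖x.1‖) +
          (Ck * (L:ℝ)) * ‖x.1 - x.2‖)))) ∂γ :=
      norm_integral_le_of_norm_le hBint (Filter.Eventually.of_forall fun x => hHdiff x)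
    have h2 : ∫ x : E d × E d, (Ck * (1 + ‖gU 0‖) * |p - q| + ((Ck * (1 + ‖gU 0‖)) * ‖x.1 - x.2‖ +
        ((Ck * (L:ℝ) * |p - q|) * ‖x.1‖ + ((Ck * (L:ℝ)) * (‖x.1 - x.2‖ * ‖x.1‖) +
          (Ck * (L:ℝ)) * ‖x.1 - x.2‖)))) ∂γ =
        Ck * (1 + ‖gU 0‖) * |p - q| +
          ((Ck * (1 + ‖gU 0‖)) * (∫ x : E d × E d, ‖x.1 - x.2‖ ∂γ) +
          ((Ck * (L:ℝ) * |p - q|) * (∫ x : E d × E d, ‖x.1‖ ∂γ) +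
          ((Ck * (L:ℝ)) * (∫ x : E d × E d, ‖x.1 - x.2‖ * ‖x.1‖ ∂γ) +
            (Ck * (L:ℝ)) * (∫ x : E d × E d, ‖x.1 - x.2‖ ∂γ)))) := by
      have iD : Integrable (fun x : E d × E d => (Ck * (1 + ‖gU 0‖)) * ‖x.1 - x.2‖) γ :=
        hD1.const_mul _
      have iN : Integrable (fun x : E d × E d => (Ck * (L:ℝ) * |p - q|) * ‖x.1‖) γ :=
        hN1.const_mul _
      have iDN : Integrable (fun x : E d × E d =>
          (Ck * (L:ℝ)) * (‖x.1 - x.2‖ * ‖x.1‖)) γ := hDN.const_mul _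
      have iD2 : Integrable (fun x : E d × E d => (Ck * (L:ℝ)) * ‖x.1 - x.2‖) γ :=
        hD1.const_mul _
      have i45 : Integrable (fun x : E d × E d =>
          (Ck * (L:ℝ)) * (‖x.1 - x.2‖ * ‖x.1‖) + (Ck * (L:ℝ)) * ‖x.1 - x.2‖) γ :=
        iDN.add iD2
      have i345 : Integrable (fun x : E d × E d => (Ck * (L:ℝ) * |p - q|) * ‖x.1‖ +
          ((Ck * (L:ℝ)) * (‖x.1 - x.2‖ * ‖x.1‖) + (Ck * (L:ℝ)) * ‖x.1 - x.2‖)) γ :=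
        iN.add i45
      have i2345 : Integrable (fun x : E d × E d => (Ck * (1 + ‖gU 0‖)) * ‖x.1 - x.2‖ +
          ((Ck * (L:ℝ) * |p - q|) * ‖x.1‖ +
          ((Ck * (L:ℝ)) * (‖x.1 - x.2‖ * ‖x.1‖) + (Ck * (L:ℝ)) * ‖x.1 - x.2‖))) γ :=
        iD.add i345
      rw [integral_add (integrable_const _) i2345, integral_add iD i345,
        integral_add iN i45, integral_add iDN iD2,
        integral_const_mul, integral_const_mul, integral_const_mul, integral_const_mul,
        integral_const, probReal_univ]
      simp [integral_const_mul]
    rw [← Real.norm_eq_abs]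
    refine (h1.trans_eq h2).trans ?_
    gcongr <;> first
      | exact hID
      | exact hIN
      | exact hIDN
      | positivity
  -- bound on |g(p,μ) - g(q,ν)|
  have hgd : |gRW k ε θ p μ - gRW k ε θ q ν| ≤ Ck * |p - q| + Ck * S := by
    rw [egp, egq]
    have e : ((∫ x : E d × E d, k (p - (inner ℝ x.1 (θ : E d) : ℝ)) ∂γ) + ε) -
        ((∫ x : E d × E d, k (q - (inner ℝ x.2 (θ : E d) : ℝ)) ∂γ) + ε) =
        ∫ x : E d × E d, (k (p - (inner ℝ x.1 (θ : E d) : ℝ)) -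
          k (q - (inner ℝ x.2 (θ : E d) : ℝ))) ∂γ := by
      rw [integral_sub hKfst hKsnd]; ring
    rw [e]
    have hBint2 : Integrable (fun x : E d × E d => Ck * |p - q| + Ck * ‖x.1 - x.2‖) γ :=
      (integrable_const _).add (hD1.const_mul _)
    have h1 : ‖∫ x : E d × E d, (k (p - (inner ℝ x.1 (θ : E d) : ℝ)) -
        k (q - (inner ℝ x.2 (θ : E d) : ℝ))) ∂γ‖ ≤
        ∫ x : E d × E d, (Ck * |p - q| + Ck * ‖x.1 - x.2‖) ∂γ := by
      refine norm_integral_le_of_norm_le hBint2 (Filter.Eventually.of_forall fun x => ?_)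
      have hab : |(p - (inner ℝ x.1 (θ : E d) : ℝ)) - (q - (inner ℝ x.2 (θ : E d) : ℝ))| ≤
          |p - q| + ‖x.1 - x.2‖ := by
        have e2 : (p - (inner ℝ x.1 (θ : E d) : ℝ)) - (q - (inner ℝ x.2 (θ : E d) : ℝ)) =
            (p - q) - (inner ℝ (x.1 - x.2) (θ : E d) : ℝ) := by
          rw [inner_sub_left]; ring
        rw [e2]
        calc |(p - q) - (inner ℝ (x.1 - x.2) (θ : E d) : ℝ)|
            ≤ |p - q| + |(inner ℝ (x.1 - x.2) (θ : E d) : ℝ)| := abs_sub _ _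
        _ ≤ |p - q| + ‖x.1 - x.2‖ := add_le_add_right (hinner1 _) _
      rw [Real.norm_eq_abs]
      calc |k (p - (inner ℝ x.1 (θ : E d) : ℝ)) - k (q - (inner ℝ x.2 (θ : E d) : ℝ))|
          ≤ Ck * |(p - (inner ℝ x.1 (θ : E d) : ℝ)) - (q - (inner ℝ x.2 (θ : E d) : ℝ))| := hklip _ _
      _ ≤ Ck * (|p - q| + ‖x.1 - x.2‖) := mul_le_mul_of_nonneg_left hab hCk.le
      _ = Ck * |p - q| + Ck * ‖x.1 - x.2‖ := by ring
    have h2 : ∫ x : E d × E d, (Ck * |p - q| + Ck * ‖x.1 - x.2‖) ∂γ =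
        Ck * |p - q| + Ck * (∫ x : E d × E d, ‖x.1 - x.2‖ ∂γ) := by
      rw [integral_add (integrable_const _) (hD1.const_mul _), integral_const_mul,
        integral_const, probReal_univ]
      simp [integral_const_mul]
    rw [← Real.norm_eq_abs]
    refine (h1.trans_eq h2).trans ?_
    gcongr
  -- bound on |f(p,μ)|
  have hfb : |fRW k kd gU θ p μ| ≤ Ck * (1 + ‖gU 0‖) + Ck * (L:ℝ) * Rm := by
    have hNμ : Integrable (fun x : E d => ‖x‖) μ :=
      integrable_of_sq' continuous_norm.aestronglyMeasurable hμ2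
    have hINμ : ∫ x : E d, ‖x‖ ∂μ ≤ Rm := by
      rw [hRmdef]
      exact int_le_sqrt_int_sq μ continuous_norm.aestronglyMeasurable (fun x => norm_nonneg _) hμ2
    have hINμ0 : 0 ≤ ∫ x : E d, ‖x‖ ∂μ := integral_nonneg fun x => norm_nonneg _
    have h1 : ‖fRW k kd gU θ p μ‖ ≤
        ∫ y : E d, (Ck * (1 + ‖gU 0‖) + Ck * (L:ℝ) * ‖y‖) ∂μ := by
      refine norm_integral_le_of_norm_le ((integrable_const _).add (hNμ.const_mul _))
        (Filter.Eventually.of_forall fun y => hHbound p y)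
    have h2 : ∫ y : E d, (Ck * (1 + ‖gU 0‖) + Ck * (L:ℝ) * ‖y‖) ∂μ =
        Ck * (1 + ‖gU 0‖) + Ck * (L:ℝ) * (∫ y : E d, ‖y‖ ∂μ) := by
      rw [integral_add (integrable_const _) (hNμ.const_mul _), integral_const_mul,
        integral_const, probReal_univ]
      simp [integral_const_mul]
    calc |fRW k kd gU θ p μ| = ‖fRW k kd gU θ p μ‖ := (Real.norm_eq_abs _).symm
    _ ≤ _ := h1
    _ = _ := h2
    _ ≤ _ := by gcongr
  -- denominators bounded below by ε
  have hgp : ε ≤ gRW k ε θ p μ :=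
    le_add_of_nonneg_left (integral_nonneg fun x => (hk_pos _).le)
  have hgq : ε ≤ gRW k ε θ q ν :=
    le_add_of_nonneg_left (integral_nonneg fun x => (hk_pos _).le)
  have hGpos : 0 < gRW k ε θ p μ := hε.trans_le hgp
  have hG'pos : 0 < gRW k ε θ q ν := hε.trans_le hgq
  -- final combination
  have halg := div_diff_bound hε hgp hgq hfd hgd hfb (by positivity) (by positivity)
    (by positivity)
  refine halg.trans ?_
  have key1 : Ck * (1 + ‖gU 0‖) * |p - q| + ((Ck * (1 + ‖gU 0‖)) * S +
      ((Ck * (L:ℝ) * |p - q|) * Rm + ((Ck * (L:ℝ)) * (S * Rm) + (Ck * (L:ℝ)) * S))) ≤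
      Ck * (1 + ‖gU 0‖ + 2 * (L:ℝ)) * ((1 + Rm) * (|p - q| + S)) := by
    nlinarith [abs_nonneg (p - q), mul_nonneg hS0 hRm0, mul_nonneg (abs_nonneg (p - q)) hRm0,
      mul_nonneg (mul_nonneg hCk.le hL0) (mul_nonneg hS0 hRm0),
      mul_nonneg (mul_nonneg hCk.le hL0) (mul_nonneg (abs_nonneg (p - q)) hRm0),
      mul_nonneg (mul_nonneg hCk.le hL0) (abs_nonneg (p - q)),
      mul_nonneg (mul_nonneg hCk.le hL0) hS0,
      mul_nonneg (mul_nonneg hCk.le (mul_nonneg (by positivity : (0:ℝ) ≤ 1 + ‖gU 0‖) hRm0))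
        (abs_nonneg (p - q)),
      mul_nonneg (mul_nonneg hCk.le (mul_nonneg (by positivity : (0:ℝ) ≤ 1 + ‖gU 0‖) hRm0)) hS0]
  have key2 : (Ck * (1 + ‖gU 0‖) + Ck * (L:ℝ) * Rm) * (Ck * |p - q| + Ck * S) ≤
      (Ck * (1 + ‖gU 0‖ + (L:ℝ))) * Ck * ((1 + Rm) * (|p - q| + S)) := by
    have hCk2 : (0:ℝ) ≤ Ck * Ck := mul_nonneg hCk.le hCk.le
    nlinarith [mul_nonneg hCk2 (mul_nonneg hL0 (abs_nonneg (p - q))),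
      mul_nonneg hCk2 (mul_nonneg hL0 hS0),
      mul_nonneg hCk2 (mul_nonneg (mul_nonneg hA0 hRm0) (abs_nonneg (p - q))),
      mul_nonneg hCk2 (mul_nonneg (mul_nonneg hA0 hRm0) hS0),
      mul_nonneg hCk2 (mul_nonneg hRm0 (abs_nonneg (p - q))),
      mul_nonneg hCk2 (mul_nonneg hRm0 hS0)]
  calc (Ck * (1 + ‖gU 0‖) + Ck * (L:ℝ) * Rm) * (Ck * |p - q| + Ck * S) / ε ^ 2 +
        (Ck * (1 + ‖gU 0‖) * |p - q| + ((Ck * (1 + ‖gU 0‖)) * S +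
          ((Ck * (L:ℝ) * |p - q|) * Rm + ((Ck * (L:ℝ)) * (S * Rm) + (Ck * (L:ℝ)) * S)))) / ε
      ≤ ((Ck * (1 + ‖gU 0‖ + (L:ℝ))) * Ck * ((1 + Rm) * (|p - q| + S))) / ε ^ 2 +
        (Ck * (1 + ‖gU 0‖ + 2 * (L:ℝ)) * ((1 + Rm) * (|p - q| + S))) / ε := by
        gcongr
  _ = _ := by ring

/-- Local Lipschitz estimate for the kernel-density Radon–Wasserstein velocity field. -/
theorem velocity_lipschitz {d : ℕ} (k kd kdd : ℝ → ℝ) (Ck : ℝ)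
    (hk_pos : ∀ p, 0 < k p)
    (hk' : ∀ p, HasDerivAt k (kd p) p) (hk'' : ∀ p, HasDerivAt kd (kdd p) p)
    (hk_bdd : ∀ p, |k p| ≤ Ck) (hkd_bdd : ∀ p, |kd p| ≤ Ck) (hkdd_bdd : ∀ p, |kdd p| ≤ Ck)
    (U : E d → ℝ) (gU : E d → E d) (L : ℝ≥0)
    (hU : ∀ x, HasGradientAt U (gU x) x) (hLip : LipschitzWith L gU)
    (ε : ℝ) (hε : 0 < ε) :
    ∃ M : ℝ, 0 < M ∧ ∀ (θ : sphere (0 : E d) 1) (p q : ℝ) (μ ν : Measure (E d)),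
      IsProbabilityMeasure μ → IsProbabilityMeasure ν →
      Integrable (fun x => ‖x‖ ^ 2) μ → Integrable (fun x => ‖x‖ ^ 2) ν →
      |fRW k kd gU θ p μ / gRW k ε θ p μ - fRW k kd gU θ q ν / gRW k ε θ q ν| ≤
        M * (1 + Real.sqrt (m2 μ)) * (|p - q| + W2 μ ν) := by
  have hCk : 0 < Ck := lt_of_lt_of_le (abs_pos.mpr (hk_pos 0).ne') (hk_bdd 0)
  set A : ℝ := ‖gU 0‖ with hA
  set M0 : ℝ := (Ck * (1 + A + 2 * (L:ℝ))) / ε + (Ck * (1 + A + (L:ℝ))) * Ck / ε ^ 2 with hM0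
  have hM0pos : 0 < M0 := by
    have h1 : 0 < Ck * (1 + A + 2 * (L:ℝ)) := mul_pos hCk (by positivity)
    have h2 : 0 < (Ck * (1 + A + (L:ℝ))) * Ck := mul_pos (mul_pos hCk (by positivity)) hCk
    exact add_pos (div_pos h1 hε) (div_pos h2 (by positivity))
  refine ⟨M0, hM0pos, fun θ p q μ ν hμ hν hμ2 hν2 => ?_⟩
  set T : ℝ := |fRW k kd gU θ p μ / gRW k ε θ p μ - fRW k kd gU θ q ν / gRW k ε θ q ν| with hT
  set Rm : ℝ := Real.sqrt (m2 μ) with hRm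
  have hRm0 : 0 ≤ Rm := Real.sqrt_nonneg _
  have hM' : 0 < M0 * (1 + Rm) := mul_pos hM0pos (by linarith)
  have hW0 : 0 ≤ W2 μ ν := Real.sqrt_nonneg _
  -- per-coupling bound
  have hkey : ∀ γ : Measure (E d × E d), IsCoupling γ μ ν →
      T ≤ M0 * (1 + Rm) * (|p - q| + Real.sqrt (∫ x, ‖x.1 - x.2‖ ^ 2 ∂γ)) := by
    intro γ hγ
    have := key_estimate k kd kdd Ck hk_pos hk' hk'' hk_bdd hkd_bdd hkdd_bdd gU L hLip
      ε hε θ p q μ ν hμ hν hμ2 hν2 γ hγ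
    simpa [hM0, hT, hRm, hA] using this
  -- nonempty set of coupling costs
  have hne : ∃ r : ℝ, ∃ γ : Measure (E d × E d), IsCoupling γ μ ν ∧
      r = ∫ x : E d × E d, ‖x.1 - x.2‖ ^ 2 ∂γ := by
    refine ⟨_, μ.prod ν, ⟨?_, ?_⟩, rfl⟩
    · simp [Measure.map_fst_prod, measure_univ]
    · simp [Measure.map_snd_prod, measure_univ]
  set t : ℝ := T / (M0 * (1 + Rm)) - |p - q| with ht
  have htW : t ≤ W2 μ ν := by
    rcases le_or_gt t 0 with h0 | h0
    · exact h0.trans hW0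
    · rw [W2, Real.le_sqrt' h0]
      refine le_csInf ?_ ?_
      · obtain ⟨r, γ, hc, hr⟩ := hne; exact ⟨r, γ, hc, hr⟩
      · rintro r ⟨γ, hc, rfl⟩
        have hr0 : 0 ≤ ∫ x : E d × E d, ‖x.1 - x.2‖ ^ 2 ∂γ :=
          integral_nonneg fun x => by positivity
        have h1 := hkey γ hc
        have h2 : t ≤ Real.sqrt (∫ x : E d × E d, ‖x.1 - x.2‖ ^ 2 ∂γ) := by
          rw [ht, sub_le_iff_le_add]
          rw [div_le_iff₀ hM']
          calc T ≤ M0 * (1 + Rm) * (|p - q| + Real.sqrt (∫ x : E d × E d, ‖x.1 - x.2‖ ^ 2 ∂γ)) := h1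
          _ = (Real.sqrt (∫ x : E d × E d, ‖x.1 - x.2‖ ^ 2 ∂γ) + |p - q|) * (M0 * (1 + Rm)) := by
              ring
        calc t ^ 2 ≤ Real.sqrt (∫ x : E d × E d, ‖x.1 - x.2‖ ^ 2 ∂γ) ^ 2 :=
              pow_le_pow_left₀ h0.le h2 2
        _ = _ := Real.sq_sqrt hr0
  have : T / (M0 * (1 + Rm)) ≤ |p - q| + W2 μ ν := by
    have := htW; rw [ht] at this; linarith
  calc T ≤ (|p - q| + W2 μ ν) * (M0 * (1 + Rm)) := (div_le_iff₀ hM').mp this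
  _ = M0 * (1 + Rm) * (|p - q| + W2 μ ν) := by ring
end
end

section
/- Let ν, μ be probability measures on ℝ^d with finite second moments, K, T > 0, and suppose X^ν_t, X^μ_t are flow maps with ρ_t = X^ν_t#ν, ρ'_t = X^μ_t#μ satisfying, for every coupling γ of (ν,μ) and γ-a.e. (x,y): |X^ν_t(x) − X^μ_t(y)| ≤ |x−y| + K ∫₀ᵗ (|X^ν_s(x) − X^μ_s(y)| + W₂(ρ_s, ρ'_s)) ds for all t ∈ [0,T]. Then there exists C depending only on K and T such that sup_{t∈[0,T]} W₂(ρ_t, ρ'_t) ≤ C · W₂(ν, μ). -/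
open MeasureTheory Metric Real
open scoped ENNReal
noncomputable section

set_option maxHeartbeats 2000000

namespace DobrushinAux

def costSet {d : ℕ} (μ ν : Measure (E d)) : Set ℝ :=
  { r : ℝ | ∃ γ : Measure (E d × E d), IsCoupling γ μ ν ∧ r = ∫ q, ‖q.1 - q.2‖ ^ 2 ∂γ }

lemma W2_eq {d : ℕ} (μ ν : Measure (E d)) : W2 μ ν = Real.sqrt (sInf (costSet μ ν)) := rfl

lemma costSet_nonneg {d : ℕ} {μ ν : Measure (E d)} {x : ℝ} (hx : x ∈ costSet μ ν) : 0 ≤ x := by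
  obtain ⟨γ, -, rfl⟩ := hx
  exact integral_nonneg fun q => by positivity

lemma costSet_bddBelow {d : ℕ} {μ ν : Measure (E d)} : BddBelow (costSet μ ν) :=
  ⟨0, fun _x hx => costSet_nonneg hx⟩

lemma W2_nonneg {d : ℕ} (μ ν : Measure (E d)) : 0 ≤ W2 μ ν := Real.sqrt_nonneg _

lemma W2_le_sqrt {d : ℕ} {μ ν : Measure (E d)} {x : ℝ} (hx : x ∈ costSet μ ν) :
    W2 μ ν ≤ Real.sqrt x := Real.sqrt_le_sqrt (csInf_le costSet_bddBelow hx)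

lemma W2_zero_left {d : ℕ} (ρ : Measure (E d)) : W2 0 ρ = 0 := by
  rcases eq_or_ne ρ 0 with rfl | hρ
  · have h0 : (0:ℝ) ∈ costSet (0 : Measure (E d)) 0 :=
      ⟨0, ⟨by simp, by simp⟩, by simp⟩
    rw [W2_eq]
    have h : sInf (costSet (0 : Measure (E d)) 0) = 0 :=
      le_antisymm (csInf_le costSet_bddBelow h0)
        (le_csInf ⟨0, h0⟩ fun x hx => costSet_nonneg hx)
    rw [h, Real.sqrt_zero]
  · have h : costSet (0 : Measure (E d)) ρ = ∅ := by
      ext x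
      simp only [Set.mem_empty_iff_false, iff_false, costSet, Set.mem_setOf_eq, not_exists]
      rintro γ ⟨⟨h1, h2⟩, -⟩
      have hγ0 : γ = 0 := by
        have h3 := congrArg (fun m : Measure (E d) => m Set.univ) h1
        simp only [Measure.map_apply measurable_fst MeasurableSet.univ,
          Set.preimage_univ] at h3
        exact Measure.measure_univ_eq_zero.mp (by simpa using h3)
      exact hρ (by rw [← h2, hγ0]; simp)
    rw [W2_eq, h, Real.sInf_empty, Real.sqrt_zero]

lemma W2_zero_right {d : ℕ} (ρ : Measure (E d)) : W2 ρ 0 = 0 := by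
  rcases eq_or_ne ρ 0 with rfl | hρ
  · exact W2_zero_left 0
  · have h : costSet ρ (0 : Measure (E d)) = ∅ := by
      ext x
      simp only [Set.mem_empty_iff_false, iff_false, costSet, Set.mem_setOf_eq, not_exists]
      rintro γ ⟨⟨h1, h2⟩, -⟩
      have hγ0 : γ = 0 := by
        have h3 := congrArg (fun m : Measure (E d) => m Set.univ) h2
        simp only [Measure.map_apply measurable_snd MeasurableSet.univ,
          Set.preimage_univ] at h3
        exact Measure.measure_univ_eq_zero.mp (by simpa using h3)
      exact hρ (by rw [← h1, hγ0]; simp)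
    rw [W2_eq, h, Real.sInf_empty, Real.sqrt_zero]

lemma coupling_isProb {d : ℕ} {ν μ : Measure (E d)} [IsProbabilityMeasure ν]
    {γ : Measure (E d × E d)} (hγ : IsCoupling γ ν μ) : IsProbabilityMeasure γ := by
  constructor
  have h := congrArg (fun m : Measure (E d) => m Set.univ) hγ.1
  simp only [Measure.map_apply measurable_fst MeasurableSet.univ, Set.preimage_univ] at h
  rw [h]; exact measure_univ

lemma integrable_fst_sq {d : ℕ} {ν μ : Measure (E d)}
    (h2ν : Integrable (fun x : E d => ‖x‖ ^ 2) ν)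
    {γ : Measure (E d × E d)} (hγ : IsCoupling γ ν μ) :
    Integrable (fun q : E d × E d => ‖q.1‖ ^ 2) γ := by
  have h : Integrable ((fun x : E d => ‖x‖ ^ 2) ∘ Prod.fst) γ := by
    rw [← integrable_map_measure ?_ measurable_fst.aemeasurable]
    · rw [hγ.1]; exact h2ν
    · rw [hγ.1]; exact h2ν.aestronglyMeasurable
  simpa [Function.comp_def] using h

lemma integrable_snd_sq {d : ℕ} {ν μ : Measure (E d)}
    (h2μ : Integrable (fun x : E d => ‖x‖ ^ 2) μ)
    {γ : Measure (E d × E d)} (hγ : IsCoupling γ ν μ) :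
    Integrable (fun q : E d × E d => ‖q.2‖ ^ 2) γ := by
  have h : Integrable ((fun x : E d => ‖x‖ ^ 2) ∘ Prod.snd) γ := by
    rw [← integrable_map_measure ?_ measurable_snd.aemeasurable]
    · rw [hγ.2]; exact h2μ
    · rw [hγ.2]; exact h2μ.aestronglyMeasurable
  simpa [Function.comp_def] using h

lemma integrable_a_sq {d : ℕ} {ν μ : Measure (E d)}
    (h2ν : Integrable (fun x : E d => ‖x‖ ^ 2) ν) (h2μ : Integrable (fun x : E d => ‖x‖ ^ 2) μ)
    {γ : Measure (E d × E d)} (hγ : IsCoupling γ ν μ) :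
    Integrable (fun q : E d × E d => ‖q.1 - q.2‖ ^ 2) γ := by
  have h1 := integrable_fst_sq h2ν hγ
  have h2 := integrable_snd_sq h2μ hγ
  refine Integrable.mono' (((h1.const_mul 2).add (h2.const_mul 2)))
    ?_ ?_
  · exact (Continuous.aestronglyMeasurable (by fun_prop))
  · refine Filter.Eventually.of_forall fun q => ?_
    have hn : ‖q.1 - q.2‖ ≤ ‖q.1‖ + ‖q.2‖ := norm_sub_le _ _
    have h0 : (0:ℝ) ≤ ‖q.1 - q.2‖ := norm_nonneg _
    rw [Real.norm_eq_abs, abs_of_nonneg (by positivity)]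
    simp only [Pi.add_apply]
    nlinarith [norm_nonneg q.1, norm_nonneg q.2, sq_nonneg (‖q.1‖ - ‖q.2‖),
      mul_le_mul hn hn h0 (by positivity : (0:ℝ) ≤ ‖q.1‖ + ‖q.2‖)]

lemma integrable_a {d : ℕ} {ν μ : Measure (E d)} [IsProbabilityMeasure ν]
    (h2ν : Integrable (fun x : E d => ‖x‖ ^ 2) ν) (h2μ : Integrable (fun x : E d => ‖x‖ ^ 2) μ)
    {γ : Measure (E d × E d)} (hγ : IsCoupling γ ν μ) :
    Integrable (fun q : E d × E d => ‖q.1 - q.2‖) γ := by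
  haveI := coupling_isProb hγ
  have h2 := integrable_a_sq h2ν h2μ hγ
  refine Integrable.mono' (h2.add (integrable_const 1)) ?_ ?_
  · exact (Continuous.aestronglyMeasurable (by fun_prop))
  · refine Filter.Eventually.of_forall fun q => ?_
    rw [Real.norm_eq_abs, abs_of_nonneg (norm_nonneg _)]
    simp only [Pi.add_apply]
    nlinarith [norm_nonneg (q.1 - q.2)]

lemma sqrt_add_le (x y : ℝ) (hx : 0 ≤ x) (hy : 0 ≤ y) :
    Real.sqrt (x + y) ≤ Real.sqrt x + Real.sqrt y := by
  have h : x + y ≤ (Real.sqrt x + Real.sqrt y) ^ 2 := by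
    have h1 := Real.sq_sqrt hx
    have h2 := Real.sq_sqrt hy
    nlinarith [Real.sqrt_nonneg x, Real.sqrt_nonneg y, mul_nonneg (Real.sqrt_nonneg x) (Real.sqrt_nonneg y)]
  calc Real.sqrt (x + y) ≤ Real.sqrt ((Real.sqrt x + Real.sqrt y) ^ 2) := Real.sqrt_le_sqrt h
    _ = _ := Real.sqrt_sq (by positivity)

lemma key_bridge {d : ℕ} {ν μ : Measure (E d)} [IsProbabilityMeasure ν] [IsProbabilityMeasure μ]
    (h2ν : Integrable (fun x : E d => ‖x‖ ^ 2) ν) (h2μ : Integrable (fun x : E d => ‖x‖ ^ 2) μ)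
    {γ : Measure (E d × E d)} (hγ : IsCoupling γ ν μ)
    (F G : E d → E d) (c₁ c₂ : ℝ) (hc₁ : 1 ≤ c₁) (hc₂ : 0 ≤ c₂)
    (hb : ∀ᵐ q ∂γ, ‖F q.1 - G q.2‖ ≤ c₁ * ‖q.1 - q.2‖ + c₂) :
    W2 (ν.map F) (μ.map G) ≤ 2 * c₁ * Real.sqrt (∫ q, ‖q.1 - q.2‖ ^ 2 ∂γ) + 2 * c₂ := by
  haveI := coupling_isProb hγ
  set r := ∫ q, ‖q.1 - q.2‖ ^ 2 ∂γ with hr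
  have hr0 : 0 ≤ r := integral_nonneg fun q => by positivity
  have hsr0 : 0 ≤ Real.sqrt r := Real.sqrt_nonneg r
  have hRHS : 0 ≤ 2 * c₁ * Real.sqrt r + 2 * c₂ := by nlinarith
  by_cases hF : AEMeasurable F ν
  · by_cases hG : AEMeasurable G μ
    · have hF' : AEMeasurable F (γ.map Prod.fst) := by rw [hγ.1]; exact hF
      have hG' : AEMeasurable G (γ.map Prod.snd) := by rw [hγ.2]; exact hG
      have hFc : AEMeasurable (fun q : E d × E d => F q.1) γ :=
        hF'.comp_aemeasurable measurable_fst.aemeasurable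
      have hGc : AEMeasurable (fun q : E d × E d => G q.2) γ :=
        hG'.comp_aemeasurable measurable_snd.aemeasurable
      set Φ : E d × E d → E d × E d := fun q => (F q.1, G q.2) with hΦdef
      have hΦ : AEMeasurable Φ γ := hFc.prodMk hGc
      have hfst : (γ.map Φ).map Prod.fst = ν.map F := by
        rw [AEMeasurable.map_map_of_aemeasurable measurable_fst.aemeasurable hΦ]
        have he : (Prod.fst ∘ Φ) = (F ∘ Prod.fst) := rfl
        rw [he, ← AEMeasurable.map_map_of_aemeasurable hF' measurable_fst.aemeasurable, hγ.1]
      have hsnd : (γ.map Φ).map Prod.snd = μ.map G := by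
        rw [AEMeasurable.map_map_of_aemeasurable measurable_snd.aemeasurable hΦ]
        have he : (Prod.snd ∘ Φ) = (G ∘ Prod.snd) := rfl
        rw [he, ← AEMeasurable.map_map_of_aemeasurable hG' measurable_snd.aemeasurable, hγ.2]
      have hmem : (∫ p, ‖p.1 - p.2‖ ^ 2 ∂(γ.map Φ)) ∈ costSet (ν.map F) (μ.map G) :=
        ⟨γ.map Φ, ⟨hfst, hsnd⟩, rfl⟩
      have hmap : (∫ p, ‖p.1 - p.2‖ ^ 2 ∂(γ.map Φ)) = ∫ q, ‖F q.1 - G q.2‖ ^ 2 ∂γ := by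
        rw [integral_map hΦ (Continuous.aestronglyMeasurable (by fun_prop))]
      have ha2 := integrable_a_sq h2ν h2μ hγ
      have ha1 := integrable_a h2ν h2μ hγ
      have hdom : Integrable (fun q : E d × E d => (c₁ * ‖q.1 - q.2‖ + c₂) ^ 2) γ := by
        have he : (fun q : E d × E d => (c₁ * ‖q.1 - q.2‖ + c₂) ^ 2)
            = fun q => c₁ ^ 2 * ‖q.1 - q.2‖ ^ 2 + ((2 * c₁ * c₂) * ‖q.1 - q.2‖ + c₂ ^ 2) := by
          funext q; ring
        rw [he]
        exact (ha2.const_mul _).add ((ha1.const_mul _).add (integrable_const _))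
      have hfint : Integrable (fun q : E d × E d => ‖F q.1 - G q.2‖ ^ 2) γ := by
        refine Integrable.mono' hdom ?_ ?_
        · exact ((hFc.sub hGc).norm.pow_const 2).aestronglyMeasurable
        · filter_upwards [hb] with q hq
          rw [Real.norm_eq_abs, abs_of_nonneg (by positivity)]
          nlinarith [norm_nonneg (F q.1 - G q.2), norm_nonneg (q.1 - q.2)]
      have hle1 : (∫ q, ‖F q.1 - G q.2‖ ^ 2 ∂γ) ≤ ∫ q, (c₁ * ‖q.1 - q.2‖ + c₂) ^ 2 ∂γ := by
        refine integral_mono_ae hfint hdom ?_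
        filter_upwards [hb] with q hq
        nlinarith [norm_nonneg (F q.1 - G q.2), norm_nonneg (q.1 - q.2)]
      have hle2 : (∫ q, (c₁ * ‖q.1 - q.2‖ + c₂) ^ 2 ∂γ) ≤ 2 * c₁ ^ 2 * r + 2 * c₂ ^ 2 := by
        have hle : (∫ q, (c₁ * ‖q.1 - q.2‖ + c₂) ^ 2 ∂γ)
            ≤ ∫ q, (2 * c₁ ^ 2 * ‖q.1 - q.2‖ ^ 2 + 2 * c₂ ^ 2) ∂γ := by
          refine integral_mono hdom ((ha2.const_mul _).add (integrable_const _)) ?_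
          intro q
          show (c₁ * ‖q.1 - q.2‖ + c₂) ^ 2 ≤ 2 * c₁ ^ 2 * ‖q.1 - q.2‖ ^ 2 + 2 * c₂ ^ 2
          nlinarith [norm_nonneg (q.1 - q.2), sq_nonneg (c₁ * ‖q.1 - q.2‖ - c₂)]
        rw [integral_add (ha2.const_mul _) (integrable_const _), integral_const_mul,
          integral_const] at hle
        simpa [measure_univ] using hle
      have hW : W2 (ν.map F) (μ.map G) ≤ Real.sqrt (2 * c₁ ^ 2 * r + 2 * c₂ ^ 2) := by
        refine (W2_le_sqrt hmem).trans ?_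
        apply Real.sqrt_le_sqrt
        rw [hmap]; exact hle1.trans hle2
      refine hW.trans ?_
      have h1 : Real.sqrt (2 * c₁ ^ 2 * r + 2 * c₂ ^ 2)
          ≤ Real.sqrt (2 * c₁ ^ 2 * r) + Real.sqrt (2 * c₂ ^ 2) :=
        sqrt_add_le _ _ (by positivity) (by positivity)
      have h2 : Real.sqrt (2 * c₁ ^ 2 * r) ≤ 2 * c₁ * Real.sqrt r := by
        have hh : (2:ℝ) * c₁ ^ 2 * r ≤ (2 * c₁) ^ 2 * r := by nlinarith
        calc Real.sqrt (2 * c₁ ^ 2 * r) ≤ Real.sqrt ((2 * c₁) ^ 2 * r) := Real.sqrt_le_sqrt hh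
          _ = 2 * c₁ * Real.sqrt r := by
              rw [Real.sqrt_mul (by positivity), Real.sqrt_sq (by linarith)]
      have h3 : Real.sqrt (2 * c₂ ^ 2) ≤ 2 * c₂ := by
        have hh : (2:ℝ) * c₂ ^ 2 ≤ (2 * c₂) ^ 2 := by nlinarith
        calc Real.sqrt (2 * c₂ ^ 2) ≤ Real.sqrt ((2 * c₂) ^ 2) := Real.sqrt_le_sqrt hh
          _ = 2 * c₂ := Real.sqrt_sq (by linarith)
      linarith
    · rw [Measure.map_of_not_aemeasurable hG, W2_zero_right]; exact hRHS
  · rw [Measure.map_of_not_aemeasurable hF, W2_zero_left]; exact hRHS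

lemma gronwall_abstract {α : Type*} [MeasurableSpace α] (γ : Measure α)
    (K T δ : ℝ) (hK : 0 < K) (hT : 0 < T) (hδ0 : 0 < δ) (hδT : δ ≤ T) (hδK : K * δ ≤ 1 / 16)
    (f : ℝ → α → ℝ) (w : ℝ → ℝ) (a : α → ℝ) (r : ℝ)
    (hf0 : ∀ s q, 0 ≤ f s q) (hw0 : ∀ s, 0 ≤ w s) (ha0 : ∀ q, 0 ≤ a q) (hr : 0 ≤ r)
    (P : α → Prop) (hP : ∀ᵐ q ∂γ, P q)
    (hyp : ∀ q, P q → ∀ t, 0 ≤ t → t ≤ T →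
      f t q ≤ a q + K * ∫ s in (0:ℝ)..t, (f s q + w s))
    (bridge : ∀ (s c₁ c₂ : ℝ), 1 ≤ c₁ → 0 ≤ c₂ →
      (∀ᵐ q ∂γ, f s q ≤ c₁ * a q + c₂) → w s ≤ 2 * c₁ * Real.sqrt r + 2 * c₂) :
    ∀ n : ℕ, ∀ q, P q → ∀ t, 0 ≤ t → t ≤ T → t ≤ (n : ℝ) * δ →
      f t q ≤ (100 * (1 + K * T)) ^ n * (a q + Real.sqrt r) := by
  have hKT : 0 < K * T := mul_pos hK hT
  have hbase1 : (1:ℝ) ≤ 100 * (1 + K * T) := by nlinarith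
  set sr := Real.sqrt r with hsrdef
  have hsr0 : 0 ≤ sr := Real.sqrt_nonneg r
  intro n
  induction n with
  | zero =>
    intro q hq t ht0 htT htn
    have ht : t = 0 := le_antisymm (by simpa using htn) ht0
    subst ht
    have h := hyp q hq 0 le_rfl hT.le
    rw [intervalIntegral.integral_same] at h
    have h1 : f 0 q ≤ a q := by linarith
    have h2 : (100 * (1 + K * T)) ^ 0 * (a q + sr) = a q + sr := by simp
    rw [h2]; linarith
  | succ n IH =>
    intro q hq t ht0 htT htn
    set A := (100 * (1 + K * T)) ^ n with hAdef
    have hA1 : (1:ℝ) ≤ A := one_le_pow₀ hbase1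
    have hA0 : (0:ℝ) ≤ A := by linarith
    have hA1' : A ≤ (100 * (1 + K * T)) ^ (n + 1) := by
      rw [pow_succ]; nlinarith
    by_cases hcase : t ≤ (n : ℝ) * δ
    · have h := IH q hq t ht0 htT hcase
      refine h.trans ?_
      have h2 := mul_le_mul_of_nonneg_right hA1' (add_nonneg (ha0 q) hsr0)
      linarith
    push_neg at hcase
    set b := (n : ℝ) * δ with hbdef
    have hb0 : 0 ≤ b := by positivity
    have hbt : b < t := hcase
    have hbT : b ≤ T := le_trans hbt.le htT
    have htb : t - b ≤ δ := by
      have h : t ≤ ((n:ℝ) + 1) * δ := by push_cast at htn; linarith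
      linarith
    -- w bound on [0, b] from IH
    have wb : ∀ u, 0 ≤ u → u ≤ b → w u ≤ 4 * A * sr := by
      intro u hu0 hub
      have hae : ∀ᵐ p ∂γ, f u p ≤ A * a p + A * sr := by
        filter_upwards [hP] with p hp
        have h2 := IH p hp u hu0 (hub.trans hbT) hub
        linarith [h2]
      have h := bridge u A (A * sr) hA1 (mul_nonneg hA0 hsr0) hae
      linarith
    -- integrability restriction helper
    have hIsub : ∀ (p : α) (s : ℝ), 0 ≤ s →
        IntervalIntegrable (fun σ => f σ p + w σ) volume 0 s →
        ∀ u v : ℝ, 0 ≤ u → u ≤ s → 0 ≤ v → v ≤ s →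
        IntervalIntegrable (fun σ => f σ p + w σ) volume u v := by
      intro p s hs0 hint u v hu0 hus hv0 hvs
      refine hint.mono_set (Set.uIcc_subset_uIcc ?_ ?_) <;>
        rw [Set.uIcc_of_le hs0]
      · exact ⟨hu0, hus⟩
      · exact ⟨hv0, hvs⟩
    -- initial segment integral bound
    have hMi : ∀ p, P p → IntervalIntegrable (fun σ => f σ p + w σ) volume 0 b →
        (∫ σ in (0:ℝ)..b, (f σ p + w σ)) ≤ T * A * a p + 5 * T * A * sr := by
      intro p hp hint
      have hle : (∫ σ in (0:ℝ)..b, (f σ p + w σ))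
          ≤ ∫ _σ in (0:ℝ)..b, (A * a p + A * sr + 4 * A * sr) := by
        refine intervalIntegral.integral_mono_on hb0 hint intervalIntegrable_const ?_
        intro u hu
        have h1 := IH p hp u hu.1 (hu.2.trans hbT) hu.2
        have h2 := wb u hu.1 hu.2
        linarith
      rw [intervalIntegral.integral_const] at hle
      simp only [smul_eq_mul, sub_zero] at hle
      have h3 : (0:ℝ) ≤ A * a p + A * sr + 4 * A * sr := by
        linarith [mul_nonneg hA0 (ha0 p), mul_nonneg hA0 hsr0]
      have h4 : b * (A * a p + A * sr + 4 * A * sr)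
          ≤ T * (A * a p + A * sr + 4 * A * sr) := mul_le_mul_of_nonneg_right hbT h3
      linarith [hle, h4]
    by_cases hqI : IntervalIntegrable (fun σ => f σ q + w σ) volume 0 t
    case neg =>
      have h0 := hyp q hq t ht0 htT
      rw [intervalIntegral.integral_undef hqI] at h0
      have h1 : f t q ≤ a q := by linarith
      refine h1.trans ?_
      have hX : (1:ℝ) ≤ (100 * (1 + K * T)) ^ (n+1) := one_le_pow₀ hbase1
      linarith [mul_nonneg (le_trans zero_le_one hX) hsr0,
        mul_le_mul_of_nonneg_right hX (ha0 q),
        mul_le_mul_of_nonneg_right hX hsr0,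
        mul_nonneg (sub_nonneg.mpr hX) (ha0 q)]
    case pos =>
    refine le_of_forall_pos_le_add ?_
    intro ε hε
    set KTA := K * T * A with hKTAdef
    have hKTA0 : 0 < KTA := by positivity
    set ε' := ε / (1 + KTA) with hε'def
    have h1KTA : (0:ℝ) < 1 + KTA := by linarith
    have hε'0 : 0 < ε' := by positivity
    have hε'le : (1 + KTA) * ε' = ε := by
      rw [hε'def]; field_simp
    set Ω : Set α := {p | P p ∧ IntervalIntegrable (fun σ => f σ p + w σ) volume 0 t}
      with hΩdef
    have hqΩ : q ∈ Ω := ⟨hq, hqI⟩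
    have hbdd : BddBelow (a '' Ω) := ⟨0, by rintro x ⟨p, -, rfl⟩; exact ha0 p⟩
    have hne : (a '' Ω).Nonempty := ⟨a q, ⟨q, hqΩ, rfl⟩⟩
    set κ := sInf (a '' Ω) with hκdef
    have hκq : κ ≤ a q := csInf_le hbdd ⟨q, hqΩ, rfl⟩
    obtain ⟨x₀, ⟨q₀, hq₀Ω, rfl⟩, ha₀lt⟩ : ∃ x ∈ a '' Ω, x < κ + ε' :=
      exists_lt_of_csInf_lt hne (by linarith)
    obtain ⟨hq₀P, hq₀I⟩ := hq₀Ω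
    -- facts about the reference integral
    have hR₀nonneg : ∀ s, b ≤ s → 0 ≤ ∫ σ in b..s, (f σ q₀ + w σ) := fun s hs =>
      intervalIntegral.integral_nonneg hs (fun u _ => add_nonneg (hf0 u q₀) (hw0 u))
    have hR₀mono : ∀ u s, b ≤ u → u ≤ s → s ≤ t →
        (∫ σ in b..u, (f σ q₀ + w σ)) ≤ ∫ σ in b..s, (f σ q₀ + w σ) := by
      intro u s hbu hus hst
      have hu0 : 0 ≤ u := hb0.trans hbu
      have hut : u ≤ t := hus.trans hst
      have hs0 : 0 ≤ s := hu0.trans hus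
      have h1 : IntervalIntegrable (fun σ => f σ q₀ + w σ) volume b u :=
        hIsub q₀ t ht0 hq₀I b u hb0 hbt.le hu0 hut
      have h2 : IntervalIntegrable (fun σ => f σ q₀ + w σ) volume u s :=
        hIsub q₀ t ht0 hq₀I u s hu0 hut hs0 hst
      have h3 := intervalIntegral.integral_add_adjacent_intervals h1 h2
      have h4 : 0 ≤ ∫ σ in u..s, (f σ q₀ + w σ) :=
        intervalIntegral.integral_nonneg hus (fun x _ => add_nonneg (hf0 x q₀) (hw0 x))
      linarith
    -- generic pointwise bound
    have hfu_gen : ∀ p, P p → ∀ s, b ≤ s → s ≤ t →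
        IntervalIntegrable (fun σ => f σ p + w σ) volume 0 s →
        ∀ u, b ≤ u → u ≤ s →
        f u p ≤ a p + K * ((T * A * a p + 5 * T * A * sr)
          + ∫ σ in b..s, (f σ p + w σ)) := by
      intro p hp s hbs hst hpI u hbu hus
      have hs0 : 0 ≤ s := hb0.trans hbs
      have hu0 : 0 ≤ u := hb0.trans hbu
      have huT : u ≤ T := ((hus.trans hst).trans htT)
      have h0b : IntervalIntegrable (fun σ => f σ p + w σ) volume 0 b :=
        hIsub p s hs0 hpI 0 b le_rfl hs0 hb0 hbs
      have hbu' : IntervalIntegrable (fun σ => f σ p + w σ) volume b u :=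
        hIsub p s hs0 hpI b u hb0 hbs hu0 hus
      have hus' : IntervalIntegrable (fun σ => f σ p + w σ) volume u s :=
        hIsub p s hs0 hpI u s hu0 hus hs0 le_rfl
      have h := hyp p hp u hu0 huT
      have hsplit := intervalIntegral.integral_add_adjacent_intervals h0b hbu'
      have hRu : (∫ σ in b..u, (f σ p + w σ)) ≤ ∫ σ in b..s, (f σ p + w σ) := by
        have h3 := intervalIntegral.integral_add_adjacent_intervals hbu' hus'
        have h4 : 0 ≤ ∫ σ in u..s, (f σ p + w σ) :=
          intervalIntegral.integral_nonneg hus (fun x _ => add_nonneg (hf0 x p) (hw0 x))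
        linarith
      have hMi' := hMi p hp h0b
      rw [← hsplit] at h
      linarith [h, mul_le_mul_of_nonneg_left (add_le_add hMi' hRu) hK.le]
    -- the key claim
    have claim : ∀ s, b ≤ s → s ≤ t → ∀ p, P p →
        IntervalIntegrable (fun σ => f σ p + w σ) volume 0 s →
        f s p ≤ (2 + 2 * KTA) * a p
          + (10 * KTA * sr + 2 * K * ∫ σ in b..s, (f σ q₀ + w σ)) := by
      intro s hbs hst p hp hpI
      have hs0 : 0 ≤ s := hb0.trans hbs
      have hpIbs : IntervalIntegrable (fun σ => f σ p + w σ) volume b s :=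
        hIsub p s hs0 hpI b s hb0 hbs hs0 le_rfl
      have hq₀Ibs : IntervalIntegrable (fun σ => f σ q₀ + w σ) volume b s :=
        hIsub q₀ t ht0 hq₀I b s hb0 hbt.le hs0 hst
      have hRp0 : 0 ≤ ∫ σ in b..s, (f σ p + w σ) :=
        intervalIntegral.integral_nonneg hbs (fun x _ => add_nonneg (hf0 x p) (hw0 x))
      have hR₀s0 : 0 ≤ ∫ σ in b..s, (f σ q₀ + w σ) := hR₀nonneg s hbs
      have hfu := hfu_gen p hp s hbs hst hpI
      have hMp0 : (0:ℝ) ≤ T * A * a p + 5 * T * A * sr := by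
        linarith [mul_nonneg (mul_nonneg hT.le hA0) (ha0 p),
          mul_nonneg (mul_nonneg hT.le hA0) hsr0]
      have h8 : (0:ℝ) ≤ a p + K * (T * A * a p + 5 * T * A * sr) := by
        linarith [ha0 p, mul_nonneg hK.le hMp0]
      have hRps : (∫ σ in b..s, (f σ p + w σ))
          ≤ (s - b) * (a p + K * ((T * A * a p + 5 * T * A * sr)
              + ∫ σ in b..s, (f σ p + w σ)))
            + ∫ σ in b..s, (f σ q₀ + w σ) := by
        have hmono2 : (∫ σ in b..s, (f σ p + w σ))
            ≤ ∫ σ in b..s, ((a p + K * ((T * A * a p + 5 * T * A * sr)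
                + ∫ σ' in b..s, (f σ' p + w σ'))) + (f σ q₀ + w σ)) := by
          refine intervalIntegral.integral_mono_on hbs hpIbs
            (intervalIntegrable_const.add hq₀Ibs) ?_
          intro u hu
          have h1 := hfu u hu.1 hu.2
          linarith [h1, hf0 u q₀]
        rw [intervalIntegral.integral_add intervalIntegrable_const hq₀Ibs,
          intervalIntegral.integral_const] at hmono2
        simp only [smul_eq_mul] at hmono2
        linarith
      have hsb : s - b ≤ δ := by linarith
      have hsb0 : 0 ≤ s - b := by linarith
      have hKsb : K * (s - b) ≤ 1 / 16 := by
        have h := mul_le_mul_of_nonneg_left hsb hK.le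
        linarith
      have hRp2 : (∫ σ in b..s, (f σ p + w σ))
          ≤ 2 * δ * (a p + K * (T * A * a p + 5 * T * A * sr))
            + 2 * ∫ σ in b..s, (f σ q₀ + w σ) := by
        have h5 : (s - b) * (a p + K * (T * A * a p + 5 * T * A * sr))
            ≤ δ * (a p + K * (T * A * a p + 5 * T * A * sr)) :=
          mul_le_mul_of_nonneg_right hsb h8
        have h6 := mul_le_mul_of_nonneg_right hKsb hRp0
        linarith [hRps, h5, h6, hR₀s0, mul_nonneg hδ0.le h8]
      have hfs := hfu s hbs le_rfl
      have h6 : K * (∫ σ in b..s, (f σ p + w σ))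
          ≤ 2 * (K * δ) * (a p + K * (T * A * a p + 5 * T * A * sr))
            + 2 * (K * ∫ σ in b..s, (f σ q₀ + w σ)) := by
        have h := mul_le_mul_of_nonneg_left hRp2 hK.le
        linarith
      have h7 : 2 * (K * δ) * (a p + K * (T * A * a p + 5 * T * A * sr))
          ≤ (1/8) * (a p + K * (T * A * a p + 5 * T * A * sr)) := by
        have h := mul_le_mul_of_nonneg_right hδK h8
        linarith
      have h9 : f s p ≤ 2 * (a p + K * (T * A * a p + 5 * T * A * sr))
          + 2 * (K * ∫ σ in b..s, (f σ q₀ + w σ)) := by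
        linarith [hfs, h6, h7, h8]
      calc f s p ≤ 2 * (a p + K * (T * A * a p + 5 * T * A * sr))
          + 2 * (K * ∫ σ in b..s, (f σ q₀ + w σ)) := h9
        _ = (2 + 2 * KTA) * a p
            + (10 * KTA * sr + 2 * K * ∫ σ in b..s, (f σ q₀ + w σ)) := by
          rw [hKTAdef]; ring
    -- w bound on [b, t]
    have hwbound : ∀ s, b ≤ s → s ≤ t →
        w s ≤ 2 * (2 + 2 * KTA) * sr
          + 2 * (10 * KTA * sr + 2 * K * ∫ σ in b..s, (f σ q₀ + w σ)) := by
      intro s hbs hst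
      have hR₀s0 : 0 ≤ ∫ σ in b..s, (f σ q₀ + w σ) := hR₀nonneg s hbs
      have hc1ge1 : (1:ℝ) ≤ 2 + 2 * KTA := by linarith
      have hc20 : (0:ℝ) ≤ 10 * KTA * sr + 2 * K * ∫ σ in b..s, (f σ q₀ + w σ) := by
        linarith [mul_nonneg hKTA0.le hsr0, mul_nonneg hK.le hR₀s0]
      refine bridge s (2 + 2 * KTA)
        (10 * KTA * sr + 2 * K * ∫ σ in b..s, (f σ q₀ + w σ)) hc1ge1 hc20 ?_
      filter_upwards [hP] with p hp
      by_cases hpI : IntervalIntegrable (fun σ => f σ p + w σ) volume 0 s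
      · exact claim s hbs hst p hp hpI
      · have h := hyp p hp s (hb0.trans hbs) (hst.trans htT)
        rw [intervalIntegral.integral_undef hpI] at h
        linarith [h, ha0 p, mul_nonneg hKTA0.le (ha0 p),
          mul_nonneg hKTA0.le hsr0, mul_nonneg hK.le hR₀s0]
    -- bound the reference integral at time t
    have hM₀0 : (0:ℝ) ≤ T * A * a q₀ + 5 * T * A * sr := by
      linarith [mul_nonneg (mul_nonneg hT.le hA0) (ha0 q₀),
        mul_nonneg (mul_nonneg hT.le hA0) hsr0]
    have hCq₀0 : (0:ℝ) ≤ a q₀ + K * (T * A * a q₀ + 5 * T * A * sr)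
        + (4 + 24 * KTA) * sr := by
      linarith [ha0 q₀, mul_nonneg hK.le hM₀0, mul_nonneg hKTA0.le hsr0, hsr0]
    have hR₀t : (∫ σ in b..t, (f σ q₀ + w σ))
        ≤ 2 * δ * (a q₀ + K * (T * A * a q₀ + 5 * T * A * sr) + (4 + 24 * KTA) * sr) := by
      have hq₀Ibt : IntervalIntegrable (fun σ => f σ q₀ + w σ) volume b t :=
        hIsub q₀ t ht0 hq₀I b t hb0 hbt.le ht0 le_rfl
      have hfu₀ := hfu_gen q₀ hq₀P t hbt.le le_rfl hq₀I
      have hR₀t0 : 0 ≤ ∫ σ in b..t, (f σ q₀ + w σ) := hR₀nonneg t hbt.le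
      have hintb : (∫ σ in b..t, (f σ q₀ + w σ))
          ≤ ∫ _σ in b..t, ((a q₀ + K * (T * A * a q₀ + 5 * T * A * sr)
              + (4 + 24 * KTA) * sr) + 5 * K * ∫ σ' in b..t, (f σ' q₀ + w σ')) := by
        refine intervalIntegral.integral_mono_on hbt.le hq₀Ibt intervalIntegrable_const ?_
        intro u hu
        have h1 := hfu₀ u hu.1 hu.2
        have h2 := hwbound u hu.1 hu.2
        have h3 := hR₀mono u t hu.1 hu.2 le_rfl
        linarith [h1, h2, mul_le_mul_of_nonneg_left h3 hK.le]
      rw [intervalIntegral.integral_const] at hintb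
      simp only [smul_eq_mul] at hintb
      have htb0 : 0 ≤ t - b := by linarith
      have h6 : (t - b) * (a q₀ + K * (T * A * a q₀ + 5 * T * A * sr)
            + (4 + 24 * KTA) * sr)
          ≤ δ * (a q₀ + K * (T * A * a q₀ + 5 * T * A * sr) + (4 + 24 * KTA) * sr) :=
        mul_le_mul_of_nonneg_right htb hCq₀0
      have h8 : (t - b) * K ≤ 1/16 := by
        have h := mul_le_mul_of_nonneg_right htb hK.le
        linarith
      have h7 := mul_le_mul_of_nonneg_right h8 hR₀t0
      linarith [hintb, h6, h7, mul_nonneg hδ0.le hCq₀0]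
    -- final assembly
    have hft := claim t hbt.le le_rfl q hq hqI
    have hR₀t0 : 0 ≤ ∫ σ in b..t, (f σ q₀ + w σ) := hR₀nonneg t hbt.le
    have hKRt : 2 * K * (∫ σ in b..t, (f σ q₀ + w σ))
        ≤ (1/4) * (a q₀ + K * (T * A * a q₀ + 5 * T * A * sr) + (4 + 24 * KTA) * sr) := by
      have h := mul_le_mul_of_nonneg_left hR₀t (by linarith : (0:ℝ) ≤ 2 * K)
      have h2 := mul_le_mul_of_nonneg_right hδK hCq₀0
      linarith
    have ha₀q : a q₀ ≤ a q + ε' := by linarith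
    have hCle : a q₀ + K * (T * A * a q₀ + 5 * T * A * sr) + (4 + 24 * KTA) * sr
        ≤ (1 + KTA) * (a q + ε') + (4 + 29 * KTA) * sr := by
      have h1 := mul_le_mul_of_nonneg_left ha₀q
        (le_of_lt hKTA0)
      rw [hKTAdef] at h1 ⊢
      nlinarith [ha₀q, mul_nonneg (mul_nonneg hK.le hT.le) hA0, hsr0]
    have hstep1 : f t q ≤ (2 + 2 * KTA) * a q + 10 * KTA * sr
        + (1/4) * ((1 + KTA) * (a q + ε') + (4 + 29 * KTA) * sr) := by
      linarith [hft, hKRt, hCle]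
    have hstep2 : f t q ≤ (3 + 3 * KTA) * a q + (1 + 18 * KTA) * sr + ε := by
      have hε'' : (1/4) * (1 + KTA) * ε' ≤ ε := by
        have : (1 + KTA) * ε' = ε := hε'le
        linarith
      linarith [hstep1, hε'', ha0 q, hsr0,
        mul_nonneg hKTA0.le (ha0 q), mul_nonneg hKTA0.le hsr0,
        mul_nonneg hKTA0.le hε'0.le]
    have hstep3 : (3 + 3 * KTA) * a q + (1 + 18 * KTA) * sr
        ≤ (100 * (1 + K * T)) ^ (n + 1) * (a q + sr) := by
      have hpow : (100 * (1 + K * T)) ^ (n + 1) = A * (100 * (1 + K * T)) := by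
        rw [pow_succ]
      rw [hpow]
      have hKTA0' : (0:ℝ) ≤ KTA := hKTA0.le
      have h1 : (3 + 3 * KTA) ≤ A * (100 * (1 + K * T)) := by
        rw [hKTAdef] at hKTA0' ⊢
        nlinarith [hA1, hKT]
      have h2 : (1 + 18 * KTA) ≤ A * (100 * (1 + K * T)) := by
        rw [hKTAdef] at hKTA0' ⊢
        nlinarith [hA1, hKT]
      linarith [mul_le_mul_of_nonneg_right h1 (ha0 q),
        mul_le_mul_of_nonneg_right h2 hsr0]
    linarith

lemma w_le_coupling {d : ℕ} (K T : ℝ) (hK : 0 < K) (hT : 0 < T)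
    (ν μ : Measure (E d)) [IsProbabilityMeasure ν] [IsProbabilityMeasure μ]
    (h2ν : Integrable (fun x : E d => ‖x‖ ^ 2) ν) (h2μ : Integrable (fun x : E d => ‖x‖ ^ 2) μ)
    (Xν Xμ : ℝ → E d → E d)
    (γ : Measure (E d × E d)) (hγ : IsCoupling γ ν μ)
    (H : ∀ᵐ q ∂γ, ∀ t ∈ Set.Icc (0 : ℝ) T,
      ‖Xν t q.1 - Xμ t q.2‖ ≤ ‖q.1 - q.2‖ +
        K * ∫ s in (0 : ℝ)..t, (‖Xν s q.1 - Xμ s q.2‖ + W2 (ν.map (Xν s)) (μ.map (Xμ s))))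
    (t : ℝ) (ht : t ∈ Set.Icc (0:ℝ) T) :
    W2 (ν.map (Xν t)) (μ.map (Xμ t))
      ≤ 4 * (100 * (1 + K * T)) ^ (Nat.ceil (T / min T (1 / (16 * K))))
        * Real.sqrt (∫ q, ‖q.1 - q.2‖ ^ 2 ∂γ) := by
  set δ := min T (1 / (16 * K)) with hδdef
  have hδ0 : 0 < δ := lt_min hT (by positivity)
  have hδT : δ ≤ T := min_le_left _ _
  have hδK : K * δ ≤ 1 / 16 := by
    have h1 : δ ≤ 1 / (16 * K) := min_le_right _ _
    have h2 := mul_le_mul_of_nonneg_left h1 hK.le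
    have h3 : K * (1 / (16 * K)) = 1 / 16 := by field_simp
    linarith
  set N := Nat.ceil (T / δ) with hNdef
  have hTN : T ≤ (N : ℝ) * δ := by
    have h := Nat.le_ceil (T / δ)
    rw [div_le_iff₀ hδ0] at h
    exact h
  set r := ∫ q, ‖q.1 - q.2‖ ^ 2 ∂γ with hrdef
  have hr0 : 0 ≤ r := integral_nonneg fun q => by positivity
  have main := gronwall_abstract γ K T δ hK hT hδ0 hδT hδK
    (fun s q => ‖Xν s q.1 - Xμ s q.2‖)
    (fun s => W2 (ν.map (Xν s)) (μ.map (Xμ s)))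
    (fun q => ‖q.1 - q.2‖) r
    (fun _s _q => norm_nonneg _) (fun _s => W2_nonneg _ _) (fun _q => norm_nonneg _) hr0
    (fun q => ∀ u ∈ Set.Icc (0:ℝ) T, ‖Xν u q.1 - Xμ u q.2‖ ≤ ‖q.1 - q.2‖ +
        K * ∫ s in (0:ℝ)..u, (‖Xν s q.1 - Xμ s q.2‖ + W2 (ν.map (Xν s)) (μ.map (Xμ s))))
    H
    (fun q hq u hu0 huT => hq u ⟨hu0, huT⟩)
    (fun s c₁ c₂ hc₁ hc₂ hae => key_bridge h2ν h2μ hγ (Xν s) (Xμ s) c₁ c₂ hc₁ hc₂ hae)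
    N
  set A := (100 * (1 + K * T)) ^ N with hAdef
  have hbase1 : (1:ℝ) ≤ 100 * (1 + K * T) := by nlinarith [mul_pos hK hT]
  have hA1 : (1:ℝ) ≤ A := one_le_pow₀ hbase1
  have hsr0 : 0 ≤ Real.sqrt r := Real.sqrt_nonneg r
  have hae : ∀ᵐ q ∂γ, ‖Xν t q.1 - Xμ t q.2‖ ≤ A * ‖q.1 - q.2‖ + A * Real.sqrt r := by
    filter_upwards [H] with q hq
    have h := main q hq t ht.1 ht.2 (ht.2.trans hTN)
    linarith [h]
  have h := key_bridge h2ν h2μ hγ (Xν t) (Xμ t) A (A * Real.sqrt r) hA1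
    (mul_nonneg (by linarith) hsr0) hae
  calc W2 (ν.map (Xν t)) (μ.map (Xμ t))
      ≤ 2 * A * Real.sqrt r + 2 * (A * Real.sqrt r) := h
    _ = 4 * A * Real.sqrt r := by ring

end DobrushinAux

open DobrushinAux in
/-- Dobrushin coupling estimate: stability of pushforwards of flows with respect to the
initial measures in Wasserstein distance, with constant depending only on `K` and `T`. -/
theorem dobrushin_stability (K T : ℝ) (hK : 0 < K) (hT : 0 < T) :
    ∃ C : ℝ, 0 < C ∧ ∀ (d : ℕ) (ν μ : Measure (E d)),
      IsProbabilityMeasure ν → IsProbabilityMeasure μ →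
      Integrable (fun x => ‖x‖ ^ 2) ν → Integrable (fun x => ‖x‖ ^ 2) μ →
      ∀ Xν Xμ : ℝ → E d → E d,
      (∀ γ : Measure (E d × E d), IsCoupling γ ν μ →
        ∀ᵐ q ∂γ, ∀ t ∈ Set.Icc (0 : ℝ) T,
          ‖Xν t q.1 - Xμ t q.2‖ ≤ ‖q.1 - q.2‖ +
            K * ∫ s in (0 : ℝ)..t,
              (‖Xν s q.1 - Xμ s q.2‖ + W2 (ν.map (Xν s)) (μ.map (Xμ s)))) →
      ∀ t ∈ Set.Icc (0 : ℝ) T,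
        W2 (ν.map (Xν t)) (μ.map (Xμ t)) ≤ C * W2 ν μ := by
  have hbase : (0:ℝ) < 100 * (1 + K * T) := by nlinarith [mul_pos hK hT]
  refine ⟨4 * (100 * (1 + K * T)) ^ (Nat.ceil (T / min T (1 / (16 * K)))), by positivity, ?_⟩
  intro d ν μ hν hμ h2ν h2μ Xν Xμ H t ht
  haveI := hν; haveI := hμ
  set C := 4 * (100 * (1 + K * T)) ^ (Nat.ceil (T / min T (1 / (16 * K)))) with hCdef
  have hC0 : 0 < C := by rw [hCdef]; positivity
  have hne : (costSet ν μ).Nonempty := by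
    refine ⟨∫ q, ‖q.1 - q.2‖ ^ 2 ∂(ν.prod μ), ν.prod μ, ⟨?_, ?_⟩, rfl⟩
    · rw [Measure.map_fst_prod]; simp
    · rw [Measure.map_snd_prod]; simp
  have hkey : ∀ x ∈ costSet ν μ, (W2 (ν.map (Xν t)) (μ.map (Xμ t)) / C) ^ 2 ≤ x := by
    rintro x ⟨γ, hγc, rfl⟩
    have h := w_le_coupling K T hK hT ν μ h2ν h2μ Xν Xμ γ hγc (H γ hγc) t ht
    have hx0 : (0:ℝ) ≤ ∫ q, ‖q.1 - q.2‖ ^ 2 ∂γ := integral_nonneg fun q => by positivity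
    have hdiv : W2 (ν.map (Xν t)) (μ.map (Xμ t)) / C
        ≤ Real.sqrt (∫ q, ‖q.1 - q.2‖ ^ 2 ∂γ) := by
      rw [div_le_iff₀ hC0, hCdef]
      linarith [h]
    calc (W2 (ν.map (Xν t)) (μ.map (Xμ t)) / C) ^ 2
        ≤ (Real.sqrt (∫ q, ‖q.1 - q.2‖ ^ 2 ∂γ)) ^ 2 :=
          pow_le_pow_left₀ (div_nonneg (W2_nonneg _ _) hC0.le) hdiv 2
      _ = _ := Real.sq_sqrt hx0
  have h2 : (W2 (ν.map (Xν t)) (μ.map (Xμ t)) / C) ^ 2 ≤ sInf (costSet ν μ) :=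
    le_csInf hne hkey
  have h3 : W2 (ν.map (Xν t)) (μ.map (Xμ t)) / C ≤ W2 ν μ := by
    rw [W2_eq]
    refine (Real.le_sqrt (div_nonneg (W2_nonneg _ _) hC0.le)
      (le_csInf hne fun x hx => costSet_nonneg hx)).mpr h2
  rw [div_le_iff₀ hC0] at h3
  linarith [h3]
end
end
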